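/- arXiv:1208.5743 — 3 statements merged into one kernel-verified Lean document; each statement's English description precedes it below -/
import Mathlib

section
/- Let K be a closed convex subset of a real Hilbert space H, p ∉ K, p_0 the nearest point of K to p, u the unit vector along p − p_0, and F a closed subspace of H containing u. Then p does not belong to the orthogonal projection of K onto F. -/
open scoped RealInnerProductSpace

/-- If `K` is a nonempty closed convex subset of a real Hilbert space, `p ∉ K`, `p₀` the
nearest point of `K` to `p`, `u` the unit vector along `p - p₀`, and `F` a closed subspace
containing `u` and `p`, then `p` is not in the orthogonal projection of `K` onto `F`. -/
theorem stmt5 {H : Type*} [NormedAddCommGroup H] [InnerProductSpace ℝ H] [CompleteSpace H]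
    (K : Set H) (hKc : IsClosed K) (hKconv : Convex ℝ K)
    (p p₀ : H) (hp : p ∉ K) (hp₀K : p₀ ∈ K)
    (hnear : ∀ q ∈ K, dist p p₀ ≤ dist p q)
    (u : H) (hu : u = ‖p - p₀‖⁻¹ • (p - p₀))
    (F : Submodule ℝ H) (hFc : IsClosed (F : Set H)) [CompleteSpace F]
    (huF : u ∈ F) (hpF : p ∈ F) :
    p ∉ (fun x => (F.orthogonalProjectionOnto x : H)) '' K := by
  rintro ⟨q, hqK, hq⟩
  simp only at hq
  -- variational inequality
  have hne : p - p₀ ≠ 0 := sub_ne_zero.mpr (fun h => hp (h ▸ hp₀K))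
  have hnorm : (0 : ℝ) < ‖p - p₀‖ := norm_pos_iff.mpr hne
  haveI : Nonempty K := ⟨⟨p₀, hp₀K⟩⟩
  have hinf : ‖p - p₀‖ = ⨅ w : K, ‖p - w‖ := by
    refine le_antisymm (le_ciInf fun w => ?_) (ciInf_le ⟨0, fun _ ⟨_, h⟩ => h ▸ norm_nonneg _⟩
      (⟨p₀, hp₀K⟩ : K))
    have := hnear w w.2
    simpa [dist_eq_norm] using this
  have hvar : ⟪p - p₀, q - p₀⟫ ≤ 0 :=
    (norm_eq_iInf_iff_real_inner_le_zero hKconv hp₀K).mp hinf q hqK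
  -- orthogonality: q - p ∈ Fᗮ
  have horth : q - p ∈ Fᗮ := by
    have h := Submodule.sub_starProjection_mem_orthogonal (K := F) q
    rwa [Submodule.starProjection_apply, hq] at h
  have hzero : ⟪p - p₀, q - p⟫ = 0 := by
    have hpu : p - p₀ = ‖p - p₀‖ • u := by
      rw [hu, smul_smul, mul_inv_cancel₀ (ne_of_gt hnorm), one_smul]
    rw [hpu, real_inner_smul_left, horth u huF, mul_zero]
  have : ⟪p - p₀, q - p₀⟫ = ⟪p - p₀, q - p⟫ + ⟪p - p₀, p - p₀⟫ := by
    rw [← inner_add_right]; congr 1; abel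
  rw [this, hzero, zero_add] at hvar
  have : (0 : ℝ) < ⟪p - p₀, p - p₀⟫ := by rw [real_inner_self_eq_norm_mul_norm]; positivity
  linarith
end

section
/- Let X and Y be topological vector spaces with X a dense linear subspace of Y, and let T : Y → ℝ^n be a surjective continuous linear map. Then for every c ∈ ℝ^n, the set T^{-1}(c) ∩ X is dense in T^{-1}(c). -/
/-- If `X` is a dense linear subspace of a topological vector space `Y` and
`T : Y → ℝⁿ` is a surjective continuous linear map, then for every `c ∈ ℝⁿ` the set
`T ⁻¹ {c} ∩ X` is dense in `T ⁻¹ {c}`. -/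
theorem stmt10 {Y : Type*} [AddCommGroup Y] [Module ℝ Y] [TopologicalSpace Y]
    [IsTopologicalAddGroup Y] [ContinuousSMul ℝ Y]
    (X : Submodule ℝ Y) (hX : Dense (X : Set Y))
    (n : ℕ) (hn : 0 < n)
    (T : Y →L[ℝ] (Fin n → ℝ)) (hT : Function.Surjective T)
    (c : Fin n → ℝ) :
    T ⁻¹' {c} ⊆ closure (T ⁻¹' {c} ∩ (X : Set Y)) := by
  -- The image submodule T(X) is dense in ℝⁿ, hence (being closed) all of ℝⁿ.
  set S : Submodule ℝ (Fin n → ℝ) := X.map (T : Y →ₗ[ℝ] (Fin n → ℝ)) with hS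
  have hSdense : Dense (S : Set (Fin n → ℝ)) := by
    intro v
    obtain ⟨z, rfl⟩ := hT v
    have : T z ∈ closure (T '' (X : Set Y)) :=
      map_mem_closure T.continuous (hX z) (Set.mapsTo_image T (X : Set Y))
    simpa [hS, Submodule.map_coe] using this
  have hSclosed : IsClosed (S : Set (Fin n → ℝ)) := Submodule.closed_of_finiteDimensional S
  have hStop : ∀ v : Fin n → ℝ, v ∈ S := by
    intro v
    have := hSclosed.closure_eq ▸ hSdense v
    simpa using this
  -- pick preimages of the standard basis inside X
  have hexists : ∀ i : Fin n, ∃ e : Y, e ∈ X ∧ T e = Pi.single i 1 := by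
    intro i
    obtain ⟨e, he, hTe⟩ := hStop (Pi.single i 1)
    exact ⟨e, he, hTe⟩
  choose e he hTe using hexists
  -- the correction map
  set φ : Y → Y := fun x => x - ∑ i, (T x i - c i) • e i with hφ
  have hφcont : Continuous φ := by
    apply continuous_id.sub
    apply continuous_finset_sum
    intro i _
    exact (((continuous_apply i).comp T.continuous).sub continuous_const).smul continuous_const
  have hTφ : ∀ x : Y, T (φ x) = c := by
    intro x
    funext j
    have : T (φ x) = T x - ∑ i, (T x i - c i) • T (e i) := by
      simp [hφ, map_sub, map_sum, map_smul]
    rw [this]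
    simp only [hTe, Pi.sub_apply, Finset.sum_apply, Pi.smul_apply, smul_eq_mul]
    rw [Finset.sum_eq_single j]
    · simp
    · intro b _ hb
      simp [Pi.single_apply, hb]
    · simp
  have hφX : Set.MapsTo φ (X : Set Y) (T ⁻¹' {c} ∩ (X : Set Y)) := by
    intro x hx
    refine ⟨by simp [hTφ x], ?_⟩
    exact X.sub_mem hx (X.sum_mem fun i _ => X.smul_mem _ (he i))
  intro y hy
  have hTy : T y = c := hy
  have hφy : φ y = y := by
    simp [hφ, hTy]
  have := map_mem_closure hφcont (hX y) hφX
  rwa [hφy] at this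
end

section
/- Let B be a real Banach space and H a real Hilbert space that is a dense linear subspace of B with continuous inclusion. If L is a closed codimension-one subspace of B, then M = L ∩ H is a closed codimension-one subspace of H, the closure of M in B equals L, and M is the unique closed codimension-one subspace of H whose closure in B is L. -/
/-- Let `B` be a real Banach space and `H` a real Hilbert space densely and continuously
included in `B` (via an injective continuous linear map `j` with dense range). If `L` is a
closed codimension-one subspace of `B` (the kernel of a nonzero continuous functional),
then `M = L ∩ H` is a closed codimension-one subspace of `H`, the closure of `M` in `B`
is `L`, and `M` is the unique such subspace of `H` with closure `L`. -/
theorem stmt13 {B H : Type*}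
    [NormedAddCommGroup B] [NormedSpace ℝ B] [CompleteSpace B]
    [NormedAddCommGroup H] [InnerProductSpace ℝ H] [CompleteSpace H]
    (j : H →L[ℝ] B) (hj : Function.Injective j) (hdense : DenseRange j)
    (L : Submodule ℝ B) (hLc : IsClosed (L : Set B))
    (hL : ∃ f : B →L[ℝ] ℝ, f ≠ 0 ∧ L = LinearMap.ker (f : B →ₗ[ℝ] ℝ))
    (M : Submodule ℝ H) (hM : M = L.comap (j : H →ₗ[ℝ] B)) :
    IsClosed (M : Set H) ∧
    (∃ g : H →L[ℝ] ℝ, g ≠ 0 ∧ M = LinearMap.ker (g : H →ₗ[ℝ] ℝ)) ∧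
    closure (j '' (M : Set H)) = (L : Set B) ∧
    (∀ N : Submodule ℝ H, IsClosed (N : Set H) →
      (∃ g : H →L[ℝ] ℝ, g ≠ 0 ∧ N = LinearMap.ker (g : H →ₗ[ℝ] ℝ)) →
      closure (j '' (N : Set H)) = (L : Set B) → N = M) := by
  obtain ⟨f, hf0, hLker⟩ := hL
  set g : H →L[ℝ] ℝ := f.comp j with hg
  -- M is the kernel of g
  have hMg : M = LinearMap.ker (g : H →ₗ[ℝ] ℝ) := by
    rw [hM, hLker]
    ext x
    simp [g, LinearMap.mem_ker]
  -- g is nonzero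
  have hg0 : g ≠ 0 := by
    intro h
    apply hf0
    ext b
    have hcl : Set.range (j : H → B) ⊆ {b | f b = 0} := by
      rintro _ ⟨x, rfl⟩
      have hx : g x = 0 := by rw [h]; rfl
      simpa [g] using hx
    have hsub : closure (Set.range (j : H → B)) ⊆ {b | f b = 0} :=
      closure_minimal hcl (isClosed_eq f.continuous continuous_const)
    have hb : b ∈ {b | f b = 0} := by
      apply hsub
      rw [hdense.closure_range]
      trivial
    simpa using hb
  -- pick x with g x = 1
  obtain ⟨x0, hx0⟩ : ∃ x : H, g x ≠ 0 := by
    by_contra hc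
    push_neg at hc
    exact hg0 (by ext x; simpa using hc x)
  set x : H := (g x0)⁻¹ • x0 with hxdef
  have hx1 : g x = 1 := by
    simp [hxdef, inv_mul_cancel₀ hx0]
  -- closedness of M
  have hMclosed : IsClosed (M : Set H) := by
    rw [hMg]
    exact ContinuousLinearMap.isClosed_ker g
  -- j '' M ⊆ L
  have himg : j '' (M : Set H) ⊆ (L : Set B) := by
    rintro _ ⟨m, hm, rfl⟩
    rw [hM] at hm
    exact hm
  -- closure of j '' M = L
  have hclos : closure (j '' (M : Set H)) = (L : Set B) := by
    apply Set.Subset.antisymm (closure_minimal himg hLc)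
    intro b hb
    have hbf : f b = 0 := by rw [hLker] at hb; exact hb
    have hbcl : b ∈ closure (Set.range (j : H → B)) := by
      rw [hdense.closure_range]; trivial
    obtain ⟨u, hu_mem, hu_lim⟩ := mem_closure_iff_seq_limit.mp hbcl
    choose h hh using hu_mem
    -- corrected sequence
    set v : ℕ → H := fun n => h n - g (h n) • x with hv
    have hvM : ∀ n, v n ∈ M := by
      intro n
      rw [hMg, LinearMap.mem_ker]
      simp [hv, hx1]
    have hjv : ∀ n, j (v n) = u n - f (u n) • j x := by
      intro n
      simp [hv, map_sub, map_smul, hh n, g]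
    have hlim : Filter.Tendsto (fun n => j (v n)) Filter.atTop (nhds b) := by
      have h1 : Filter.Tendsto (fun n => f (u n)) Filter.atTop (nhds (f b)) :=
        (f.continuous.tendsto b).comp hu_lim
      have h2 : Filter.Tendsto (fun n => u n - f (u n) • j x) Filter.atTop
          (nhds (b - f b • j x)) :=
        hu_lim.sub (h1.smul tendsto_const_nhds)
      rw [hbf, zero_smul, sub_zero] at h2
      simpa [hjv] using h2
    exact mem_closure_iff_seq_limit.mpr
      ⟨fun n => j (v n), fun n => ⟨v n, hvM n, rfl⟩, hlim⟩
  refine ⟨hMclosed, ⟨g, hg0, hMg⟩, hclos, ?_⟩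
  -- uniqueness
  rintro N hNc ⟨g', hg'0, hNker⟩ hNcl
  have hNM : N ≤ M := by
    intro n hn
    have : j n ∈ (L : Set B) := by
      rw [← hNcl]
      exact subset_closure ⟨n, hn, rfl⟩
    rw [hM]
    exact this
  apply le_antisymm hNM
  -- M ≤ N : otherwise M = ⊤, contradicting g x = 1
  by_contra hMN
  have ⟨m0, hm0M, hm0N⟩ : ∃ m0 ∈ M, m0 ∉ N := by
    by_contra hc
    push_neg at hc
    exact hMN hc
  have hg'm0 : g' m0 ≠ 0 := by
    intro hz
    exact hm0N (by rw [hNker]; exact hz)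
  have hMtop : ∀ h : H, h ∈ M := by
    intro hh
    have hdecomp : hh = (hh - (g' hh / g' m0) • m0) + (g' hh / g' m0) • m0 := by ring_nf; abel
    have h1 : hh - (g' hh / g' m0) • m0 ∈ N := by
      rw [hNker, LinearMap.mem_ker]
      simp only [ContinuousLinearMap.coe_coe, map_sub, map_smul, smul_eq_mul]
      field_simp
      ring
    rw [hdecomp]
    exact M.add_mem (hNM h1) (M.smul_mem _ hm0M)
  have : g x = 0 := by
    have := hMtop x
    rw [hMg, LinearMap.mem_ker] at this
    exact this
  rw [hx1] at this
  exact one_ne_zero this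
end
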